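/- arXiv:1809.08838 — 4 statements merged into one kernel-verified Lean document; each statement's English description precedes it below -/
import Mathlib

section
/- Let $m \ge 1$, let $A, B$ be $m \times m$ real symmetric positive semidefinite matrices, and let $\mu > 0$. If $AB + BA = 2\mu I$, then $A$ and $B$ are positive definite, they commute, and $AB = \mu I$. -/
open Matrix

/-- A real PSD matrix with zero trace is zero. -/
lemma psd_trace_zero_eq_zero {m : ℕ} {M : Matrix (Fin m) (Fin m) ℝ}
    (hM : M.PosSemidef) (ht : M.trace = 0) : M = 0 := by
  have hnn : ∀ i, 0 ≤ M i i := fun i => by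
    have := hM.dotProduct_mulVec_nonneg (Pi.single i 1)
    simpa [mulVec_single, dotProduct_single] using this
  have hdiag : ∀ i, M i i = 0 := by
    intro i
    refine le_antisymm ?_ (hnn i)
    calc M i i = ∑ j ∈ ({i} : Finset (Fin m)), M j j := by simp
      _ ≤ ∑ j, M j j := Finset.sum_le_sum_of_subset_of_nonneg (Finset.subset_univ _)
          (fun j _ _ => hnn j)
      _ = 0 := ht
  have hcol : ∀ j, M *ᵥ Pi.single j 1 = 0 := by
    intro j
    rw [← (hM.dotProduct_mulVec_zero_iff (Pi.single j 1))]
    simp [mulVec_single, dotProduct_single, hdiag j]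
  ext i j
  have := congrFun (hcol j) i
  simpa [mulVec_single] using this

/-- If `A, B` are symmetric positive semidefinite and their Jordan product is `μ I`
(`AB + BA = 2μI`) with `μ > 0`, then `A, B` are positive definite, commute, and `AB = μ I`. -/
theorem stmt_1 {m : ℕ} (hm : 1 ≤ m) (A B : Matrix (Fin m) (Fin m) ℝ)
    (hA : A.PosSemidef) (hB : B.PosSemidef) (μ : ℝ) (hμ : 0 < μ)
    (h : A * B + B * A = (2 * μ) • (1 : Matrix (Fin m) (Fin m) ℝ)) :
    A.PosDef ∧ B.PosDef ∧ A * B = B * A ∧ A * B = μ • (1 : Matrix (Fin m) (Fin m) ℝ) := by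
  have hAt : Aᵀ = A := hA.1
  have hBt : Bᵀ = B := hB.1
  -- Positive definiteness of A
  have hApd : A.PosDef := by
    refine PosDef.of_dotProduct_mulVec_pos hA.1 (fun x hx => ?_)
    rcases lt_or_eq_of_le (hA.dotProduct_mulVec_nonneg x) with h' | h'
    · simpa using h'
    · exfalso
      have hAx : A *ᵥ x = 0 := (hA.dotProduct_mulVec_zero_iff x).mp (by simpa using h'.symm)
      have hx2 : (0:ℝ) < x ⬝ᵥ x := by
        have hne : x ⬝ᵥ x ≠ 0 := fun h0 => hx (dotProduct_self_eq_zero.mp h0)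
        exact lt_of_le_of_ne (Finset.sum_nonneg fun i _ => mul_self_nonneg (x i)) (Ne.symm hne)
      have hline := congrArg (fun M => x ⬝ᵥ (M *ᵥ x)) h
      simp only [add_mulVec, dotProduct_add, smul_mulVec, one_mulVec,
        dotProduct_smul, smul_eq_mul] at hline
      rw [← mulVec_mulVec, ← mulVec_mulVec, hAx, mulVec_zero, dotProduct_zero] at hline
      have hxA : x ᵥ* A = 0 := by rw [← hAt, vecMul_transpose, hAx]
      have h1 : x ⬝ᵥ (A *ᵥ (B *ᵥ x)) = 0 := by
        rw [dotProduct_mulVec, hxA, zero_dotProduct]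
      rw [h1, zero_add] at hline
      nlinarith
  have hBpd : B.PosDef := by
    refine PosDef.of_dotProduct_mulVec_pos hB.1 (fun x hx => ?_)
    rcases lt_or_eq_of_le (hB.dotProduct_mulVec_nonneg x) with h' | h'
    · simpa using h'
    · exfalso
      have hBx : B *ᵥ x = 0 := (hB.dotProduct_mulVec_zero_iff x).mp (by simpa using h'.symm)
      have hx2 : (0:ℝ) < x ⬝ᵥ x := by
        have hne : x ⬝ᵥ x ≠ 0 := fun h0 => hx (dotProduct_self_eq_zero.mp h0)
        exact lt_of_le_of_ne (Finset.sum_nonneg fun i _ => mul_self_nonneg (x i)) (Ne.symm hne)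
      have hline := congrArg (fun M => x ⬝ᵥ (M *ᵥ x)) h
      simp only [add_mulVec, dotProduct_add, smul_mulVec, one_mulVec,
        dotProduct_smul, smul_eq_mul] at hline
      rw [← mulVec_mulVec, ← mulVec_mulVec, hBx, mulVec_zero, dotProduct_zero] at hline
      have hxB : x ᵥ* B = 0 := by rw [← hBt, vecMul_transpose, hBx]
      have h1 : x ⬝ᵥ (B *ᵥ (A *ᵥ x)) = 0 := by
        rw [dotProduct_mulVec, hxB, zero_dotProduct]
      rw [h1, add_zero] at hline
      nlinarith
  -- commutator C
  set C := A * B - B * A with hCdef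
  have hCt : Cᵀ = -C := by
    simp only [hCdef, transpose_sub, transpose_mul, hAt, hBt]
    rw [neg_sub]
  -- A² commutes with B
  have hsq : A * A * B = B * (A * A) := by
    have h1 := congrArg (fun M => A * M) h
    have h2 := congrArg (fun M => M * A) h
    simp only [mul_add, add_mul] at h1 h2
    have h12 : A * (A * B) + A * (B * A) = A * B * A + B * A * A := by
      have : A * ((2*μ) • (1 : Matrix (Fin m) (Fin m) ℝ))
           = ((2*μ) • (1 : Matrix (Fin m) (Fin m) ℝ)) * A := by
        rw [Matrix.mul_smul, Matrix.smul_mul, mul_one, one_mul]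
      rw [h1, this, ← h2]
    rw [← mul_assoc A B A, mul_assoc B A A] at h12
    rw [add_comm (A * (A * B)) (A * B * A)] at h12
    have h13 := add_left_cancel h12
    rw [mul_assoc A A B]
    exact h13
  -- AC = -(CA)
  have hsum : A * C + C * A = 0 := by
    have : A * C + C * A = A * A * B - B * (A * A) := by
      simp only [hCdef]; noncomm_ring
    rw [this, hsq, sub_self]
  have hAC : A * C = -(C * A) := eq_neg_of_add_eq_zero_left hsum
  have hCA : C * A = -(A * C) := eq_neg_of_add_eq_zero_right hsum
  -- M := Cᵀ A C is PSD with trace 0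
  have hpsdM : (Cᵀ * A * C).PosSemidef := by
    have := hA.conjTranspose_mul_mul_same C
    rwa [conjTranspose_eq_transpose_of_trivial] at this
  have hM2 : Cᵀ * A * C = A * C * C := by
    rw [hCt, neg_mul, hCA, neg_neg]
  have htr : (Cᵀ * A * C).trace = 0 := by
    have e1 : (A * C * C).trace = (C * (A * C)).trace := trace_mul_comm (A * C) C
    have e2 : C * (A * C) = -(A * C * C) := by
      rw [← mul_assoc, hCA, neg_mul]
    rw [e2, trace_neg] at e1
    rw [hM2]; linarith
  have hM0 : Cᵀ * A * C = 0 := psd_trace_zero_eq_zero hpsdM htr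
  -- C v = 0 for all v, hence C = 0
  have hCv : ∀ v, C *ᵥ v = 0 := by
    intro v
    by_contra hne
    have hpos := hApd.dotProduct_mulVec_pos hne
    have hz : (C *ᵥ v) ⬝ᵥ (A *ᵥ (C *ᵥ v)) = 0 := by
      have h0 := congrArg (fun M => v ⬝ᵥ (M *ᵥ v)) hM0
      simp only [zero_mulVec, dotProduct_zero] at h0
      have key : v ⬝ᵥ ((Cᵀ * A * C) *ᵥ v) = (C *ᵥ v) ⬝ᵥ (A *ᵥ (C *ᵥ v)) := by
        simp only [mul_assoc, ← mulVec_mulVec, dotProduct_mulVec, vecMul_transpose]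
      rw [← key]
      exact h0
    simp only [star_trivial] at hpos
    rw [hz] at hpos
    exact lt_irrefl 0 hpos
  have hC0 : C = 0 := by
    ext i j
    have := congrFun (hCv (Pi.single j 1)) i
    simpa [mulVec_single] using this
  have hcomm : A * B = B * A := sub_eq_zero.mp hC0
  refine ⟨hApd, hBpd, hcomm, ?_⟩
  have h2 : A * B + A * B = (2 * μ) • (1 : Matrix (Fin m) (Fin m) ℝ) := by
    rw [← hcomm] at h; exact h
  have h3 : (2:ℝ) • (A * B) = (2 * μ) • (1 : Matrix (Fin m) (Fin m) ℝ) := by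
    rw [two_smul]; exact h2
  have := congrArg (fun M => (2⁻¹ : ℝ) • M) h3
  simpa [smul_smul, mul_assoc] using this
end

section
/- Let $m \ge 1$, let $F, V$ be $m \times m$ real symmetric positive definite matrices, let $D$ be an $m \times m$ real symmetric matrix, and let $\mu > 0$. Let $F^{1/2}$ and $F^{-1/2}$ denote the positive definite square root of $F$ and its inverse. Define $\Delta V := \mu F^{-1} - V - \tfrac{1}{2}\left(F^{-1} D V + V D F^{-1}\right)$. Then $\Delta V$ is symmetric and satisfies the scaled Newton equation with scaling matrix $P = F^{-1/2}$: namely, $F^{1/2} V F^{1/2} + \left(F^{-1/2} D F^{-1/2}\right) \circ \left(F^{1/2} V F^{1/2}\right) + F^{1/2} \Delta V F^{1/2} = \mu I$. -/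
open Matrix

section
open scoped ComplexOrder

/-- The square root of a positive semidefinite matrix, as defined in the older Mathlib
(`Matrix.PosSemidef.sqrt`, since removed). -/
noncomputable def Matrix.PosSemidef.sqrt {n 𝕜 : Type*} [Fintype n] [RCLike 𝕜] [DecidableEq n]
    {A : Matrix n n 𝕜} (hA : A.PosSemidef) : Matrix n n 𝕜 :=
  hA.1.eigenvectorUnitary.1 * diagonal ((↑) ∘ (√·) ∘ hA.1.eigenvalues) *
  (star hA.1.eigenvectorUnitary : Matrix n n 𝕜)

end

open scoped ComplexOrder in
theorem Matrix.PosSemidef.sqrt_mul_self {n 𝕜 : Type*} [Fintype n] [RCLike 𝕜] [DecidableEq n]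
    {A : Matrix n n 𝕜} (hA : A.PosSemidef) : hA.sqrt * hA.sqrt = A := by
  have hU : (star hA.1.eigenvectorUnitary : Matrix n n 𝕜) * hA.1.eigenvectorUnitary.1 = 1 :=
    Unitary.star_mul_self_of_mem hA.1.eigenvectorUnitary.2
  have hD : diagonal (((↑) ∘ (√·) ∘ hA.1.eigenvalues : n → 𝕜)) *
      diagonal ((↑) ∘ (√·) ∘ hA.1.eigenvalues) = diagonal (RCLike.ofReal ∘ hA.1.eigenvalues) := by
    rw [diagonal_mul_diagonal]
    congr 1
    funext i
    simp only [Function.comp_apply]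
    rw [← RCLike.ofReal_mul, Real.mul_self_sqrt (hA.eigenvalues_nonneg i)]
  conv_rhs => rw [hA.1.spectral_theorem, Unitary.conjStarAlgAut_apply]
  unfold Matrix.PosSemidef.sqrt
  simp only [Matrix.mul_assoc]
  rw [← Matrix.mul_assoc (star _ : Matrix n n 𝕜) _ (diagonal _ * _), hU, Matrix.one_mul,
    ← Matrix.mul_assoc (diagonal _), hD]

/-- The HRVW/KSH/M direction `ΔV = μF⁻¹ - V - (F⁻¹DV + VDF⁻¹)/2` is symmetric and
satisfies the scaled Newton equation with scaling matrix `P = F^{-1/2}`: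
`F^{1/2} V F^{1/2} + (F^{-1/2} D F^{-1/2}) ∘ (F^{1/2} V F^{1/2}) + F^{1/2} ΔV F^{1/2} = μ I`. -/
theorem stmt_5 {m : ℕ} (hm : 1 ≤ m) (F V D ΔV : Matrix (Fin m) (Fin m) ℝ)
    (hF : F.PosDef) (hV : V.PosDef) (hD : D.IsHermitian) (μ : ℝ) (hμ : 0 < μ)
    (hΔV : ΔV = μ • F⁻¹ - V - (1/2 : ℝ) • (F⁻¹ * D * V + V * D * F⁻¹)) :
    ΔV.IsHermitian ∧
    hF.posSemidef.sqrt * V * hF.posSemidef.sqrt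
      + (1/2 : ℝ) • ((hF.posSemidef.sqrt⁻¹ * D * hF.posSemidef.sqrt⁻¹) *
            (hF.posSemidef.sqrt * V * hF.posSemidef.sqrt)
          + (hF.posSemidef.sqrt * V * hF.posSemidef.sqrt) *
            (hF.posSemidef.sqrt⁻¹ * D * hF.posSemidef.sqrt⁻¹))
      + hF.posSemidef.sqrt * ΔV * hF.posSemidef.sqrt
      = μ • (1 : Matrix (Fin m) (Fin m) ℝ) := by
  set S := hF.posSemidef.sqrt with hSdef
  have hS2 : S * S = F := hF.posSemidef.sqrt_mul_self
  have hdetF : F.det ≠ 0 := ne_of_gt hF.det_pos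
  have hdetS : IsUnit S.det := by
    refine isUnit_iff_ne_zero.2 fun h => hdetF ?_
    rw [← hS2, det_mul, h, mul_zero]
  have hSi : S⁻¹ * S = 1 := nonsing_inv_mul S hdetS
  have hSi' : S * S⁻¹ = 1 := mul_nonsing_inv S hdetS
  have hFi : F⁻¹ = S⁻¹ * S⁻¹ := by
    apply inv_eq_left_inv
    rw [← hS2, Matrix.mul_assoc, ← Matrix.mul_assoc S⁻¹ S S, hSi, Matrix.one_mul, hSi]
  have hFiH : F⁻¹.IsHermitian := hF.isHermitian.inv
  constructor
  · have hVh : Vᴴ = V := hV.isHermitian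
    have hDh : Dᴴ = D := hD
    show ΔVᴴ = ΔV
    rw [hΔV]
    simp only [conjTranspose_sub, conjTranspose_smul, conjTranspose_add, conjTranspose_mul,
      hFiH.eq, hVh, hDh, star_trivial, Matrix.mul_assoc]
    rw [add_comm (V * (D * F⁻¹))]
  · have hA : ∀ X : Matrix (Fin m) (Fin m) ℝ, S⁻¹ * (S * X) = X := by
      intro X; rw [← Matrix.mul_assoc, hSi, Matrix.one_mul]
    have hB : ∀ X : Matrix (Fin m) (Fin m) ℝ, S * (S⁻¹ * X) = X := by
      intro X; rw [← Matrix.mul_assoc, hSi', Matrix.one_mul]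
    rw [hΔV, hFi]
    simp only [Matrix.mul_sub, Matrix.sub_mul, Matrix.mul_add, Matrix.add_mul,
      Matrix.mul_smul, Matrix.smul_mul, Matrix.mul_assoc, hA, hB, hSi, hSi',
      Matrix.mul_one]
    abel
end

section
/- Let $m \ge 1$, let $\tilde F, \tilde V$ be $m \times m$ real symmetric positive definite matrices that commute ($\tilde F \tilde V = \tilde V \tilde F$), let $\tilde D, \Delta\tilde V$ be $m \times m$ real symmetric matrices, and let $\mu > 0$. If the scaled Newton equation $\tilde F \circ \tilde V + \tilde D \circ \tilde V + \tilde F \circ \Delta \tilde V = \mu I$ holds, then $\mu\, \mathrm{Tr}\left(\tilde F^{-1} \tilde D + \tilde V^{-1} \Delta\tilde V\right) = \mathrm{Tr}\left(\mu^2 \tilde F^{-1} \tilde V^{-1}\right) - m\mu$. -/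
open Matrix

/-- Trace identity (eq. (24)): if `F̃, Ṽ` are commuting symmetric positive definite
matrices and the scaled Newton equation `F̃∘Ṽ + D̃∘Ṽ + F̃∘ΔṼ = μI` holds, then
`μ Tr(F̃⁻¹D̃ + Ṽ⁻¹ΔṼ) = Tr(μ² F̃⁻¹Ṽ⁻¹) - mμ`. -/
theorem stmt_7 {m : ℕ} (hm : 1 ≤ m) (tF tV tD ΔtV : Matrix (Fin m) (Fin m) ℝ)
    (htF : tF.PosDef) (htV : tV.PosDef) (hcomm : tF * tV = tV * tF)
    (htD : tD.IsHermitian) (hΔ : ΔtV.IsHermitian) (μ : ℝ) (hμ : 0 < μ)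
    (hNewton : (1/2 : ℝ) • (tF * tV + tV * tF) + (1/2 : ℝ) • (tD * tV + tV * tD)
        + (1/2 : ℝ) • (tF * ΔtV + ΔtV * tF) = μ • (1 : Matrix (Fin m) (Fin m) ℝ)) :
    μ * (tF⁻¹ * tD + tV⁻¹ * ΔtV).trace = ((μ ^ 2) • (tF⁻¹ * tV⁻¹)).trace - (m : ℝ) * μ := by
  have hFdet : IsUnit tF.det := htF.det_pos.ne'.isUnit
  have hVdet : IsUnit tV.det := htV.det_pos.ne'.isUnit
  have hFinv : tF⁻¹ * tF = 1 := Matrix.nonsing_inv_mul tF hFdet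
  have hFinv' : tF * tF⁻¹ = 1 := Matrix.mul_nonsing_inv tF hFdet
  have hVinv : tV⁻¹ * tV = 1 := Matrix.nonsing_inv_mul tV hVdet
  have hVinv' : tV * tV⁻¹ = 1 := Matrix.mul_nonsing_inv tV hVdet
  -- tV⁻¹ commutes with tF
  have hcV : tV⁻¹ * tF = tF * tV⁻¹ := by
    calc tV⁻¹ * tF = tV⁻¹ * tF * (tV * tV⁻¹) := by rw [hVinv', Matrix.mul_one]
      _ = tV⁻¹ * (tF * tV) * tV⁻¹ := by noncomm_ring
      _ = tV⁻¹ * (tV * tF) * tV⁻¹ := by rw [hcomm]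
      _ = (tV⁻¹ * tV) * (tF * tV⁻¹) := by noncomm_ring
      _ = tF * tV⁻¹ := by rw [hVinv, Matrix.one_mul]
  have hcF : tV * tF⁻¹ = tF⁻¹ * tV := by
    calc tV * tF⁻¹ = tF⁻¹ * tF * (tV * tF⁻¹) := by rw [hFinv, Matrix.one_mul]
      _ = tF⁻¹ * (tF * tV) * tF⁻¹ := by noncomm_ring
      _ = tF⁻¹ * (tV * tF) * tF⁻¹ := by rw [hcomm]
      _ = tF⁻¹ * tV * (tF * tF⁻¹) := by noncomm_ring
      _ = tF⁻¹ * tV := by rw [hFinv', Matrix.mul_one]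
  have h := congrArg (fun M => (tF⁻¹ * (tV⁻¹ * M)).trace) hNewton
  simp only [Matrix.mul_add, Matrix.mul_smul, Matrix.trace_add, Matrix.trace_smul,
    Matrix.mul_one, smul_eq_mul] at h
  -- simplify each trace term
  have t1 : (tF⁻¹ * (tV⁻¹ * (tF * tV))).trace = (m : ℝ) := by
    rw [← Matrix.mul_assoc tV⁻¹, hcV, Matrix.mul_assoc tF, hVinv, Matrix.mul_one,
      hFinv, Matrix.trace_one]
    simp
  have t1' : (tF⁻¹ * (tV⁻¹ * (tV * tF))).trace = (m : ℝ) := by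
    rw [← hcomm]; exact t1
  have t2 : (tF⁻¹ * (tV⁻¹ * (tD * tV))).trace = (tF⁻¹ * tD).trace := by
    rw [show tF⁻¹ * (tV⁻¹ * (tD * tV)) = (tF⁻¹ * (tV⁻¹ * tD)) * tV by noncomm_ring,
      Matrix.trace_mul_comm,
      show tV * (tF⁻¹ * (tV⁻¹ * tD)) = (tV * tF⁻¹) * (tV⁻¹ * tD) by noncomm_ring,
      hcF, show (tF⁻¹ * tV) * (tV⁻¹ * tD) = tF⁻¹ * ((tV * tV⁻¹) * tD) by noncomm_ring,
      hVinv', Matrix.one_mul]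
  have t2' : (tF⁻¹ * (tV⁻¹ * (tV * tD))).trace = (tF⁻¹ * tD).trace := by
    rw [← Matrix.mul_assoc tV⁻¹, hVinv, Matrix.one_mul]
  have t3 : (tF⁻¹ * (tV⁻¹ * (tF * ΔtV))).trace = (tV⁻¹ * ΔtV).trace := by
    rw [← Matrix.mul_assoc tV⁻¹, hcV, Matrix.mul_assoc tF, ← Matrix.mul_assoc tF⁻¹,
      hFinv, Matrix.one_mul]
  have t3' : (tF⁻¹ * (tV⁻¹ * (ΔtV * tF))).trace = (tV⁻¹ * ΔtV).trace := by
    rw [show tF⁻¹ * (tV⁻¹ * (ΔtV * tF)) = (tF⁻¹ * (tV⁻¹ * ΔtV)) * tF by noncomm_ring,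
      Matrix.trace_mul_comm,
      show tF * (tF⁻¹ * (tV⁻¹ * ΔtV)) = (tF * tF⁻¹) * (tV⁻¹ * ΔtV) by noncomm_ring,
      hFinv', Matrix.one_mul]
  rw [t1, t1', t2, t2', t3, t3'] at h
  have key : (m : ℝ) + (tF⁻¹ * tD).trace + (tV⁻¹ * ΔtV).trace
      = μ * (tF⁻¹ * tV⁻¹).trace := by linarith
  rw [Matrix.trace_add, Matrix.trace_smul, smul_eq_mul]
  nlinarith [key]
end

section
/- Let $n, m, s \ge 1$, let $T$ be a compact metric space, let $a : T \to \mathbb{R}^n$ and $b : T \to \mathbb{R}$ be continuous, let $F_0, F_1, \ldots, F_n$ be $m \times m$ real symmetric matrices with $F(x) := F_0 + \sum_{i=1}^n x_i F_i$, let $G \in \mathbb{R}^{s \times n}$ and $h \in \mathbb{R}^s$. Assume the feasible set $\mathcal{F} := \{x \in \mathbb{R}^n : F(x) \text{ positive semidefinite},\ a(\tau)^{\top}x \le b(\tau) \ \forall \tau \in T,\ Gx = h\}$ is nonempty and compact. Let $\gamma_0 > 0$ and let sequences $x^r, \Delta x^r \in \mathbb{R}^n$, $s_r \in (0,1]$,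 and $\gamma_r \in (0, \gamma_0]$ satisfy for every $r \ge 0$: $x^{r+1} = x^r + s_r \Delta x^r$, $G x^0 = h$, $G(x^r + \Delta x^r) = h$, $F(x^r)$ is positive definite, and $\max_{\tau \in T}\left(a(\tau)^{\top}(x^r + \Delta x^r) - b(\tau)\right) \le \gamma_r$. Then the sequence $\{x^r\}$ is bounded. -/
open Matrix

private theorem quad_affine' {n m : ℕ} (F₀ : Matrix (Fin m) (Fin m) ℝ)
    (Fi : Fin n → Matrix (Fin m) (Fin m) ℝ) (v : Fin m → ℝ) (y : Fin n → ℝ) :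
    v ⬝ᵥ ((F₀ + ∑ i, y i • Fi i) *ᵥ v) = v ⬝ᵥ (F₀ *ᵥ v) + ∑ i, y i * (v ⬝ᵥ (Fi i *ᵥ v)) := by
  let φ : Matrix (Fin m) (Fin m) ℝ →ₗ[ℝ] ℝ :=
    { toFun := fun M => v ⬝ᵥ (M *ᵥ v)
      map_add' := by intro M N; simp [Matrix.add_mulVec, dotProduct_add]
      map_smul' := by intro c M; simp [Matrix.smul_mulVec, dotProduct_smul] }
  have h1 : ∀ M, φ M = v ⬝ᵥ (M *ᵥ v) := fun _ => rfl
  rw [← h1, map_add, map_sum]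
  simp [h1, Matrix.smul_mulVec, dotProduct_smul]

/-- Proposition 1: boundedness of the primal iterates of the interior point SQP-type
method in the affine case `g(x,τ) = a(τ)ᵀx - b(τ)`, assuming the feasible set of the
SISDP is nonempty and compact. -/
theorem stmt_12 {n m s : ℕ} (hn : 1 ≤ n) (hm : 1 ≤ m) (hs : 1 ≤ s)
    {T : Type*} [MetricSpace T] [CompactSpace T]
    (a : T → (Fin n → ℝ)) (b : T → ℝ) (ha : Continuous a) (hb : Continuous b)
    (F₀ : Matrix (Fin m) (Fin m) ℝ) (Fi : Fin n → Matrix (Fin m) (Fin m) ℝ)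
    (hF₀ : F₀.IsHermitian) (hFi : ∀ i, (Fi i).IsHermitian)
    (G : Matrix (Fin s) (Fin n) ℝ) (h : Fin s → ℝ)
    (hfeas_ne : {x : Fin n → ℝ |
        (F₀ + ∑ i, x i • Fi i).PosSemidef ∧ (∀ τ, a τ ⬝ᵥ x ≤ b τ) ∧
          G.mulVec x = h}.Nonempty)
    (hfeas_cpt : IsCompact {x : Fin n → ℝ |
        (F₀ + ∑ i, x i • Fi i).PosSemidef ∧ (∀ τ, a τ ⬝ᵥ x ≤ b τ) ∧
          G.mulVec x = h})
    (γ₀ : ℝ) (hγ₀ : 0 < γ₀)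
    (x Δx : ℕ → (Fin n → ℝ)) (st γ : ℕ → ℝ)
    (hst : ∀ r, st r ∈ Set.Ioc (0 : ℝ) 1)
    (hγ : ∀ r, γ r ∈ Set.Ioc (0 : ℝ) γ₀)
    (hupd : ∀ r, x (r + 1) = x r + st r • Δx r)
    (hx0 : G.mulVec (x 0) = h)
    (heq : ∀ r, G.mulVec (x r + Δx r) = h)
    (hpd : ∀ r, (F₀ + ∑ i, (x r) i • Fi i).PosDef)
    (hsi : ∀ r, ∀ τ, a τ ⬝ᵥ (x r + Δx r) - b τ ≤ γ r) :
    ∃ C : ℝ, ∀ r, ‖x r‖ ≤ C := by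
  classical
  obtain ⟨xs, hxsPSD, hxsSI, hxsG⟩ := hfeas_ne
  obtain ⟨R, hR⟩ := hfeas_cpt.isBounded.exists_norm_le
  have hRnn : 0 ≤ R := le_trans (norm_nonneg xs) (hR xs ⟨hxsPSD, hxsSI, hxsG⟩)
  set t : ℝ := R + ‖xs‖ + 1 with ht
  have htpos : 0 < t := by positivity
  -- bound M on the semi-infinite slack along iterates
  set M : ℝ := max γ₀ (⨆ τ, (a τ ⬝ᵥ x 0 - b τ)) with hMdef
  have hMγ : γ₀ ≤ M := le_max_left _ _
  have hMpos : 0 < M := lt_of_lt_of_le hγ₀ hMγ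
  have hcont0 : Continuous fun τ => a τ ⬝ᵥ x 0 - b τ := by
    refine Continuous.sub ?_ hb
    simp only [dotProduct]
    exact continuous_finset_sum _ fun i _ => ((continuous_apply i).comp ha).mul continuous_const
  have hM0 : ∀ τ, a τ ⬝ᵥ x 0 - b τ ≤ M := by
    intro τ
    exact le_trans (le_ciSup (isCompact_range hcont0).bddAbove τ) (le_max_right _ _)
  -- equality constraints hold at every iterate
  have hGx : ∀ r, G.mulVec (x r) = h := by
    intro r
    induction r with
    | zero => exact hx0
    | succ r ih =>
      have hΔ : G.mulVec (Δx r) = 0 := by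
        have h2 := heq r
        rw [Matrix.mulVec_add, ih] at h2
        have := congrArg (fun z => z - h) h2
        simpa using this
      rw [hupd r, Matrix.mulVec_add, Matrix.mulVec_smul, ih, hΔ, smul_zero, add_zero]
  -- semi-infinite slack bounded by M at every iterate
  have hSI : ∀ r, ∀ τ, a τ ⬝ᵥ x r - b τ ≤ M := by
    intro r
    induction r with
    | zero => exact hM0
    | succ r ih =>
      intro τ
      have h1 := hsi r τ
      have hs1 := hst r
      have hg1 := hγ r
      rw [hupd r]
      have e1 : a τ ⬝ᵥ (x r + st r • Δx r)
          = (1 - st r) * (a τ ⬝ᵥ x r) + st r * (a τ ⬝ᵥ (x r + Δx r)) := by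
        simp [dotProduct_add, dotProduct_smul]
        ring
      rw [e1]
      have h3 := ih τ
      obtain ⟨hs0, hs2⟩ := hs1
      obtain ⟨hg0, hg2⟩ := hg1
      nlinarith
  -- now prove boundedness by contradiction
  by_contra hC
  push_neg at hC
  choose f hf using hC
  set y : ℕ → (Fin n → ℝ) := fun k => x (f (‖xs‖ + ((k : ℝ) + 1) * t)) with hy
  have hyb : ∀ k : ℕ, ‖xs‖ + ((k : ℝ) + 1) * t < ‖y k‖ := fun k => hf _
  set d : ℕ → (Fin n → ℝ) := fun k => y k - xs with hd
  have hdn : ∀ k : ℕ, ((k : ℝ) + 1) * t < ‖d k‖ := by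
    intro k
    have h1 : ‖y k‖ - ‖xs‖ ≤ ‖y k - xs‖ := norm_sub_norm_le _ _
    have := hyb k
    simp only [hd]
    linarith
  have hdpos : ∀ k : ℕ, 0 < ‖d k‖ := by
    intro k
    have : (0 : ℝ) < ((k : ℝ) + 1) * t := by positivity
    linarith [hdn k]
  set lam : ℕ → ℝ := fun k => t / ‖d k‖ with hlam
  have hlam_pos : ∀ k, 0 < lam k := fun k => div_pos htpos (hdpos k)
  have hlam_le : ∀ k : ℕ, lam k ≤ 1 / ((k : ℝ) + 1) := by
    intro k
    rw [div_le_div_iff₀ (hdpos k) (by positivity)]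
    nlinarith [hdn k]
  have hlam_le1 : ∀ k, lam k ≤ 1 := by
    intro k
    refine le_trans (hlam_le k) ?_
    rw [div_le_one (by positivity)]
    have : (0 : ℝ) ≤ (k : ℝ) := Nat.cast_nonneg k
    linarith
  set p : ℕ → (Fin n → ℝ) := fun k => xs + lam k • d k with hp
  have hpnorm : ∀ k, ‖p k - xs‖ = t := by
    intro k
    have : p k - xs = lam k • d k := by simp [hp]
    rw [this, norm_smul, Real.norm_eq_abs, abs_of_pos (hlam_pos k), hlam]
    simp only []
    rw [div_mul_cancel₀ _ (ne_of_gt (hdpos k))]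
  have hpball : ∀ k, p k ∈ Metric.closedBall xs t := by
    intro k
    rw [Metric.mem_closedBall, dist_eq_norm, hpnorm k]
  obtain ⟨q, _, φ, hφ, htd⟩ := (isCompact_closedBall xs t).tendsto_subseq hpball
  -- lam (φ k) → 0
  have hlam0 : Filter.Tendsto (fun k => lam (φ k)) Filter.atTop (nhds 0) := by
    refine squeeze_zero (fun k => (hlam_pos _).le) (fun k => ?_)
      tendsto_one_div_add_atTop_nhds_zero_nat
    refine le_trans (hlam_le (φ k)) ?_
    have hk : (k : ℝ) ≤ (φ k : ℝ) := by exact_mod_cast hφ.le_apply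
    apply one_div_le_one_div_of_le (by positivity)
    linarith
  -- properties of p k
  have hpG : ∀ k, G.mulVec (p k) = h := by
    intro k
    simp only [hp, hd]
    rw [Matrix.mulVec_add, Matrix.mulVec_smul, Matrix.mulVec_sub, hGx _, hxsG, sub_self,
      smul_zero, add_zero]
  have hpSI : ∀ k τ, a τ ⬝ᵥ p k - b τ ≤ lam k * M := by
    intro k τ
    have e1 : a τ ⬝ᵥ p k = a τ ⬝ᵥ xs + lam k * (a τ ⬝ᵥ y k - a τ ⬝ᵥ xs) := by
      simp [hp, hd, dotProduct_add, dotProduct_smul, dotProduct_sub]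
    have h1 : a τ ⬝ᵥ xs ≤ b τ := hxsSI τ
    have h2 : a τ ⬝ᵥ y k - b τ ≤ M := hSI _ τ
    have h3 := hlam_pos k
    have h4 := hlam_le1 k
    nlinarith [e1]
  have hpQ : ∀ k (v : Fin m → ℝ), 0 ≤ v ⬝ᵥ ((F₀ + ∑ i, p k i • Fi i) *ᵥ v) := by
    intro k v
    have hq1 : 0 ≤ v ⬝ᵥ ((F₀ + ∑ i, xs i • Fi i) *ᵥ v) := by
      have := hxsPSD.dotProduct_mulVec_nonneg v
      simpa using this
    have hq2 : 0 ≤ v ⬝ᵥ ((F₀ + ∑ i, y k i • Fi i) *ᵥ v) := by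
      have := (hpd (f (‖xs‖ + ((k : ℝ) + 1) * t))).posSemidef.dotProduct_mulVec_nonneg v
      simpa [hy] using this
    rw [quad_affine'] at hq1 hq2 ⊢
    have key : ∑ i, p k i * (v ⬝ᵥ (Fi i *ᵥ v))
        = (1 - lam k) * ∑ i, xs i * (v ⬝ᵥ (Fi i *ᵥ v))
          + lam k * ∑ i, y k i * (v ⬝ᵥ (Fi i *ᵥ v)) := by
      rw [Finset.mul_sum, Finset.mul_sum, ← Finset.sum_add_distrib]
      refine Finset.sum_congr rfl fun i _ => ?_
      simp only [hp, hd, Pi.add_apply, Pi.smul_apply, Pi.sub_apply, smul_eq_mul]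
      ring
    rw [key]
    have h3 := hlam_pos k
    have h4 := hlam_le1 k
    nlinarith
  -- pass to the limit: q is feasible
  have hherm : ∀ z : Fin n → ℝ, (F₀ + ∑ i, z i • Fi i).IsHermitian := by
    intro z
    refine hF₀.add ?_
    show (∑ i, z i • Fi i)ᴴ = ∑ i, z i • Fi i
    rw [Matrix.conjTranspose_sum]
    refine Finset.sum_congr rfl fun i _ => ?_
    rw [Matrix.conjTranspose_smul, star_trivial, (hFi i).eq]
  have hqPSD : (F₀ + ∑ i, q i • Fi i).PosSemidef := by
    refine .of_dotProduct_mulVec_nonneg (hherm q) fun v => ?_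
    have hQc : Continuous fun z : Fin n → ℝ => v ⬝ᵥ ((F₀ + ∑ i, z i • Fi i) *ᵥ v) := by
      simp only [quad_affine']
      exact continuous_const.add
        (continuous_finset_sum _ fun i _ => (continuous_apply i).mul continuous_const)
    have htq : Filter.Tendsto (fun k => v ⬝ᵥ ((F₀ + ∑ i, p (φ k) i • Fi i) *ᵥ v))
        Filter.atTop (nhds (v ⬝ᵥ ((F₀ + ∑ i, q i • Fi i) *ᵥ v))) :=
      (hQc.tendsto q).comp htd
    have := ge_of_tendsto' htq (fun k => hpQ (φ k) v)
    simpa using this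
  have hqSI : ∀ τ, a τ ⬝ᵥ q ≤ b τ := by
    intro τ
    have hdc : Continuous fun z : Fin n → ℝ => a τ ⬝ᵥ z := by
      simp only [dotProduct]
      exact continuous_finset_sum _ fun i _ => continuous_const.mul (continuous_apply i)
    have h1 : Filter.Tendsto (fun k => a τ ⬝ᵥ p (φ k) - b τ) Filter.atTop
        (nhds (a τ ⬝ᵥ q - b τ)) := ((hdc.sub continuous_const).tendsto q).comp htd
    have h2 : Filter.Tendsto (fun k => lam (φ k) * M) Filter.atTop (nhds 0) := by
      simpa using hlam0.mul_const M
    have := le_of_tendsto_of_tendsto' h1 h2 (fun k => hpSI (φ k) τ)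
    linarith
  have hqG : G.mulVec q = h := by
    have hmc : Continuous fun z : Fin n → ℝ => G.mulVec z := by
      refine continuous_pi fun j => ?_
      simp only [Matrix.mulVec, dotProduct]
      exact continuous_finset_sum _ fun i _ => continuous_const.mul (continuous_apply i)
    have h1 : Filter.Tendsto (fun k => G.mulVec (p (φ k))) Filter.atTop
        (nhds (G.mulVec q)) := (hmc.tendsto q).comp htd
    have h2 : Filter.Tendsto (fun k => G.mulVec (p (φ k))) Filter.atTop (nhds h) := by
      simp only [hpG]
      exact tendsto_const_nhds
    exact tendsto_nhds_unique h1 h2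
  -- but q is far from xs: contradiction with feasible-set bound
  have hqdist : ‖q - xs‖ = t := by
    have h1 : Filter.Tendsto (fun k => ‖p (φ k) - xs‖) Filter.atTop (nhds (‖q - xs‖)) :=
      (((continuous_id.sub continuous_const).norm).tendsto q).comp htd
    have h2 : Filter.Tendsto (fun k => ‖p (φ k) - xs‖) Filter.atTop (nhds t) := by
      simp only [hpnorm]
      exact tendsto_const_nhds
    exact tendsto_nhds_unique h1 h2
  have hqR : ‖q‖ ≤ R := hR q ⟨hqPSD, hqSI, hqG⟩
  have h5 : ‖q - xs‖ ≤ ‖q‖ + ‖xs‖ := norm_sub_le _ _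
  rw [hqdist, ht] at h5
  linarith
end
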